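/- (Debye representation.) Let U ⊆ ℝ³ be open, let ω, ε, μ ∈ ℂ, and set k² = ω²εμ. Let u, v : ℝ³ → ℂ be three times continuously differentiable on U and satisfy the scalar Helmholtz equations Δu + k²u = 0 and Δv + k²v = 0 on U. Define the vector fields (x u)(x) = u(x)·x and (x v)(x) = v(x)·x, where x denotes the position vector, and set E = ∇×(∇×(x v)) + iωμ ∇×(x u) and H = ∇×(∇×(x u)) − iωε ∇×(x v). Then (E, H) satisfies the time-harmonic Maxwell equations on U: ∇×H = −iωεE and ∇×E = iωμH. -/

import Mathlib

open scoped BigOperators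

noncomputable section

/-- Points of `ℝ³`. -/
abbrev E3 := EuclideanSpace ℝ (Fin 3)

/-- Partial derivative of a scalar field in the `i`-th coordinate direction. -/
noncomputable def pd (i : Fin 3) (u : E3 → ℂ) : E3 → ℂ :=
  fun x => fderiv ℝ u x (EuclideanSpace.single i 1)

/-- Gradient of a scalar field, as a `ℂ³`-valued field. -/
noncomputable def grad (u : E3 → ℂ) : E3 → Fin 3 → ℂ :=
  fun x i => pd i u x

/-- Laplacian of a scalar field. -/
noncomputable def lap (u : E3 → ℂ) : E3 → ℂ :=
  fun x => ∑ i : Fin 3, pd i (pd i u) x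

/-- Divergence of a `ℂ³`-valued vector field. -/
noncomputable def vdiv (F : E3 → Fin 3 → ℂ) : E3 → ℂ :=
  fun x => ∑ i : Fin 3, pd i (fun y => F y i) x

/-- Curl of a `ℂ³`-valued vector field:
`(∇×F)ᵢ = ∂_{i+1} F_{i+2} − ∂_{i+2} F_{i+1}` (indices mod 3). -/
noncomputable def curl (F : E3 → Fin 3 → ℂ) : E3 → Fin 3 → ℂ :=
  fun x i => pd (i + 1) (fun y => F y (i + 2)) x - pd (i + 2) (fun y => F y (i + 1)) x

/-- Cross product on `ℂ³`. -/
def crossC (a b : Fin 3 → ℂ) : Fin 3 → ℂ :=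
  fun i => a (i + 1) * b (i + 2) - a (i + 2) * b (i + 1)

/-- The vector field `x u`: the scalar field `u` times the position vector. -/
noncomputable def xvec (u : E3 → ℂ) : E3 → Fin 3 → ℂ :=
  fun y i => u y * (y i : ℂ)

namespace DebyeAux

lemma pd_congr {U : Set E3} (hU : IsOpen U) {f g : E3 → ℂ} (h : ∀ y ∈ U, f y = g y)
    {x : E3} (hx : x ∈ U) (i : Fin 3) : pd i f x = pd i g x := by
  unfold pd
  rw [Filter.EventuallyEq.fderiv_eq (Filter.eventuallyEq_of_mem (hU.mem_nhds hx) h)]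

lemma hasFDerivAt_coord (k : Fin 3) (x : E3) :
    HasFDerivAt (fun y : E3 => ((y k : ℝ) : ℂ))
      (Complex.ofRealCLM.comp (EuclideanSpace.proj (𝕜 := ℝ) k)) x :=
  (Complex.ofRealCLM.comp (EuclideanSpace.proj (𝕜 := ℝ) k)).hasFDerivAt

lemma diff_coord (k : Fin 3) (x : E3) :
    DifferentiableAt ℝ (fun y : E3 => ((y k : ℝ) : ℂ)) x :=
  (hasFDerivAt_coord k x).differentiableAt

lemma contDiff_coord (k : Fin 3) {n : WithTop ℕ∞} :
    ContDiff ℝ n (fun y : E3 => ((y k : ℝ) : ℂ)) :=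
  (Complex.ofRealCLM.comp (EuclideanSpace.proj (𝕜 := ℝ) k)).contDiff

lemma pd_add {f g : E3 → ℂ} {x : E3} (hf : DifferentiableAt ℝ f x)
    (hg : DifferentiableAt ℝ g x) (i : Fin 3) :
    pd i (fun y => f y + g y) x = pd i f x + pd i g x := by
  unfold pd
  rw [fderiv_fun_add hf hg]
  simp

lemma pd_sub {f g : E3 → ℂ} {x : E3} (hf : DifferentiableAt ℝ f x)
    (hg : DifferentiableAt ℝ g x) (i : Fin 3) :
    pd i (fun y => f y - g y) x = pd i f x - pd i g x := by
  unfold pd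
  rw [fderiv_fun_sub hf hg]
  simp

lemma pd_const_mul {f : E3 → ℂ} {x : E3} (hf : DifferentiableAt ℝ f x) (c : ℂ) (i : Fin 3) :
    pd i (fun y => c * f y) x = c * pd i f x := by
  unfold pd
  rw [fderiv_const_mul hf]
  simp

lemma pd_mul_coord {f : E3 → ℂ} {x : E3} (hf : DifferentiableAt ℝ f x) (j k : Fin 3) :
    pd j (fun y => f y * ((y k : ℝ) : ℂ)) x
      = pd j f x * ((x k : ℝ) : ℂ) + f x * (if k = j then 1 else 0) := by
  have h := (hf.hasFDerivAt.fun_mul (hasFDerivAt_coord k x)).fderiv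
  unfold pd
  rw [h]
  simp [EuclideanSpace.single_apply, apply_ite Complex.ofReal]
  split_ifs <;> ring

lemma pd_mul_coord_same {f : E3 → ℂ} {x : E3} (hf : DifferentiableAt ℝ f x) (j : Fin 3) :
    pd j (fun y => f y * ((y j : ℝ) : ℂ)) x = pd j f x * ((x j : ℝ) : ℂ) + f x := by
  rw [pd_mul_coord hf j j]; simp

lemma pd_mul_coord_ne {f : E3 → ℂ} {x : E3} (hf : DifferentiableAt ℝ f x) {j k : Fin 3}
    (hkj : k ≠ j) :
    pd j (fun y => f y * ((y k : ℝ) : ℂ)) x = pd j f x * ((x k : ℝ) : ℂ) := by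
  rw [pd_mul_coord hf j k]; simp [hkj]

lemma contDiffOn_pd {U : Set E3} (hU : IsOpen U) {w : E3 → ℂ} {n m : WithTop ℕ∞}
    (hw : ContDiffOn ℝ n w U) (h : m + 1 ≤ n) (j : Fin 3) : ContDiffOn ℝ m (pd j w) U := by
  unfold pd
  exact (hw.fderiv_of_isOpen hU h).clm_apply contDiffOn_const

lemma clairaut {U : Set E3} (hU : IsOpen U) {w : E3 → ℂ} (hw : ContDiffOn ℝ 2 w U)
    {x : E3} (hx : x ∈ U) (i j : Fin 3) : pd i (pd j w) x = pd j (pd i w) x := by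
  have hx' : U ∈ nhds x := hU.mem_nhds hx
  have hwx : ContDiffAt ℝ 2 w x := hw.contDiffAt hx'
  have hdw : DifferentiableAt ℝ (fderiv ℝ w) x :=
    (hwx.fderiv_right (le_refl _)).differentiableAt one_ne_zero
  have hev : ∀ᶠ y in nhds x, HasFDerivAt w (fderiv ℝ w y) y := by
    have h1 : ∀ᶠ y in nhds x, y ∈ U := hU.eventually_mem hx
    filter_upwards [h1] with y hy
    exact (((hw.differentiableOn (by norm_num)).differentiableAt
      (hU.mem_nhds hy))).hasFDerivAt
  have hsymm := second_derivative_symmetric_of_eventually hev hdw.hasFDerivAt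
    (EuclideanSpace.single i 1) (EuclideanSpace.single j 1)
  have key : ∀ a b : Fin 3, pd a (pd b w) x
      = fderiv ℝ (fderiv ℝ w) x (EuclideanSpace.single a 1) (EuclideanSpace.single b 1) := by
    intro a b
    unfold pd
    rw [fderiv_clm_apply hdw (differentiableAt_const _)]
    simp
  rw [key, key, hsymm]

lemma sum_perm (g : Fin 3 → ℂ) (i : Fin 3) : ∑ j, g j = g i + g (i + 1) + g (i + 2) := by
  fin_cases i <;> simp [Fin.sum_univ_three] <;> ring

lemma idx1 : ∀ i : Fin 3, i + 2 + 1 = i := by decide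
lemma idx2 : ∀ i : Fin 3, i + 2 + 2 = i + 1 := by decide
lemma idx3 : ∀ i : Fin 3, i + 1 + 1 = i + 2 := by decide
lemma idx4 : ∀ i : Fin 3, i + 1 + 2 = i := by decide
lemma ne21 : ∀ i : Fin 3, i + 2 ≠ i + 1 := by decide
lemma ne12 : ∀ i : Fin 3, i + 1 ≠ i + 2 := by decide
lemma ne01 : ∀ i : Fin 3, i ≠ i + 1 := by decide
lemma ne02 : ∀ i : Fin 3, i ≠ i + 2 := by decide

noncomputable def phi (w : E3 → ℂ) : E3 → ℂ :=
  fun y => (∑ j, pd j w y * ((y j : ℝ) : ℂ)) + w y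

lemma diffAt3 {U : Set E3} (hU : IsOpen U) {w : E3 → ℂ} (hw : ContDiffOn ℝ 3 w U)
    {x : E3} (hx : x ∈ U) : DifferentiableAt ℝ w x :=
  (hw.differentiableOn (by norm_num)).differentiableAt (hU.mem_nhds hx)

lemma pd2_contDiffOn {U : Set E3} (hU : IsOpen U) {w : E3 → ℂ} (hw : ContDiffOn ℝ 3 w U)
    (j : Fin 3) : ContDiffOn ℝ 2 (pd j w) U :=
  contDiffOn_pd hU hw (by norm_num) j

lemma pd_diffAt {U : Set E3} (hU : IsOpen U) {w : E3 → ℂ} (hw : ContDiffOn ℝ 3 w U)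
    {x : E3} (hx : x ∈ U) (j : Fin 3) : DifferentiableAt ℝ (pd j w) x :=
  ((pd2_contDiffOn hU hw j).differentiableOn (by norm_num)).differentiableAt (hU.mem_nhds hx)

lemma curl_xvec_eq {U : Set E3} (hU : IsOpen U) {w : E3 → ℂ} (hw : ContDiffOn ℝ 3 w U) :
    ∀ x ∈ U, ∀ i : Fin 3, curl (xvec w) x i
      = pd (i + 1) w x * ((x (i + 2) : ℝ) : ℂ) - pd (i + 2) w x * ((x (i + 1) : ℝ) : ℂ) := by
  intro x hx i
  have hdw := diffAt3 hU hw hx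
  show pd (i + 1) (fun y => w y * ((y (i + 2) : ℝ) : ℂ)) x
      - pd (i + 2) (fun y => w y * ((y (i + 1) : ℝ) : ℂ)) x = _
  rw [pd_mul_coord_ne hdw (ne21 i), pd_mul_coord_ne hdw (ne12 i)]

lemma pd_phi_eq {U : Set E3} (hU : IsOpen U) {w : E3 → ℂ} (hw : ContDiffOn ℝ 3 w U)
    {x : E3} (hx : x ∈ U) (i : Fin 3) :
    pd i (phi w) x
      = pd i (pd i w) x * ((x i : ℝ) : ℂ)
        + pd i (pd (i + 1) w) x * ((x (i + 1) : ℝ) : ℂ)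
        + pd i (pd (i + 2) w) x * ((x (i + 2) : ℝ) : ℂ)
        + 2 * pd i w x := by
  have hphi : phi w = fun y =>
      (pd i w y * ((y i : ℝ) : ℂ) + pd (i + 1) w y * ((y (i + 1) : ℝ) : ℂ)
        + pd (i + 2) w y * ((y (i + 2) : ℝ) : ℂ)) + w y := by
    funext y
    unfold phi
    rw [sum_perm (fun j => pd j w y * ((y j : ℝ) : ℂ)) i]
  rw [hphi]
  have d1 : DifferentiableAt ℝ (fun y => pd i w y * ((y i : ℝ) : ℂ)) x :=
    (pd_diffAt hU hw hx i).mul (diff_coord i x)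
  have d2 : DifferentiableAt ℝ (fun y => pd (i + 1) w y * ((y (i + 1) : ℝ) : ℂ)) x :=
    (pd_diffAt hU hw hx (i + 1)).mul (diff_coord (i + 1) x)
  have d3 : DifferentiableAt ℝ (fun y => pd (i + 2) w y * ((y (i + 2) : ℝ) : ℂ)) x :=
    (pd_diffAt hU hw hx (i + 2)).mul (diff_coord (i + 2) x)
  rw [pd_add ((d1.fun_add d2).fun_add d3) (diffAt3 hU hw hx), pd_add (d1.fun_add d2) d3, pd_add d1 d2,
    pd_mul_coord_same (pd_diffAt hU hw hx i) i,
    pd_mul_coord_ne (pd_diffAt hU hw hx (i + 1)) (Ne.symm (ne01 i)),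
    pd_mul_coord_ne (pd_diffAt hU hw hx (i + 2)) (Ne.symm (ne02 i))]
  ring

lemma curlcurl_xvec_eq {U : Set E3} (hU : IsOpen U) {w : E3 → ℂ} (hw : ContDiffOn ℝ 3 w U)
    {k2 : ℂ} (hH : ∀ x ∈ U, lap w x + k2 * w x = 0) :
    ∀ x ∈ U, ∀ i : Fin 3,
      curl (curl (xvec w)) x i = pd i (phi w) x + k2 * (w x * ((x i : ℝ) : ℂ)) := by
  intro x hx i
  have e1 : pd (i + 1) (fun y => curl (xvec w) y (i + 2)) x
      = pd (i + 1) (fun y => pd i w y * ((y (i + 1) : ℝ) : ℂ)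
          - pd (i + 1) w y * ((y i : ℝ) : ℂ)) x := by
    refine pd_congr hU (fun y hy => ?_) hx _
    rw [curl_xvec_eq hU hw y hy (i + 2), idx1, idx2]
  have e2 : pd (i + 2) (fun y => curl (xvec w) y (i + 1)) x
      = pd (i + 2) (fun y => pd (i + 2) w y * ((y i : ℝ) : ℂ)
          - pd i w y * ((y (i + 2) : ℝ) : ℂ)) x := by
    refine pd_congr hU (fun y hy => ?_) hx _
    rw [curl_xvec_eq hU hw y hy (i + 1), idx3, idx4]
  have lhs_eq : curl (curl (xvec w)) x i
      = pd (i + 1) (fun y => curl (xvec w) y (i + 2)) x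
        - pd (i + 2) (fun y => curl (xvec w) y (i + 1)) x := rfl
  have da : ∀ a b : Fin 3, DifferentiableAt ℝ (fun y => pd a w y * ((y b : ℝ) : ℂ)) x :=
    fun a b => (pd_diffAt hU hw hx a).mul (diff_coord b x)
  rw [lhs_eq, e1, e2, pd_sub (da i (i + 1)) (da (i + 1) i),
    pd_sub (da (i + 2) i) (da i (i + 2)),
    pd_mul_coord_same (pd_diffAt hU hw hx i) (i + 1),
    pd_mul_coord_ne (pd_diffAt hU hw hx (i + 1)) (ne01 i),
    pd_mul_coord_ne (pd_diffAt hU hw hx (i + 2)) (ne02 i),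
    pd_mul_coord_same (pd_diffAt hU hw hx i) (i + 2),
    pd_phi_eq hU hw hx i]
  have hw2 : ContDiffOn ℝ 2 w U := hw.of_le (by norm_num)
  have hC1 : pd (i + 1) (pd i w) x = pd i (pd (i + 1) w) x := clairaut hU hw2 hx (i + 1) i
  have hC2 : pd (i + 2) (pd i w) x = pd i (pd (i + 2) w) x := clairaut hU hw2 hx (i + 2) i
  have hHx : pd i (pd i w) x + pd (i + 1) (pd (i + 1) w) x + pd (i + 2) (pd (i + 2) w) x
      + k2 * w x = 0 := by
    have h0 := hH x hx
    unfold lap at h0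
    rw [sum_perm (fun j => pd j (pd j w) x) i] at h0
    linear_combination h0
  linear_combination hC1 * ((x (i + 1) : ℝ) : ℂ) + hC2 * ((x (i + 2) : ℝ) : ℂ)
    - hHx * ((x i : ℝ) : ℂ)

lemma phi_contDiffOn {U : Set E3} (hU : IsOpen U) {w : E3 → ℂ} (hw : ContDiffOn ℝ 3 w U) :
    ContDiffOn ℝ 2 (phi w) U := by
  unfold phi
  refine ContDiffOn.add ?_ (hw.of_le (by norm_num))
  exact ContDiffOn.sum fun j _ =>
    (pd2_contDiffOn hU hw j).mul ((contDiff_coord j).contDiffOn)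

lemma pd_phi_diffAt {U : Set E3} (hU : IsOpen U) {w : E3 → ℂ} (hw : ContDiffOn ℝ 3 w U)
    {x : E3} (hx : x ∈ U) (j : Fin 3) : DifferentiableAt ℝ (pd j (phi w)) x :=
  ((contDiffOn_pd (m := 1) hU (phi_contDiffOn hU hw) (by norm_num) j).differentiableOn
    (by norm_num)).differentiableAt (hU.mem_nhds hx)

lemma triple_curl {U : Set E3} (hU : IsOpen U) {w : E3 → ℂ} (hw : ContDiffOn ℝ 3 w U)
    {k2 : ℂ} (hH : ∀ x ∈ U, lap w x + k2 * w x = 0) :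
    ∀ x ∈ U, ∀ i : Fin 3,
      curl (curl (curl (xvec w))) x i = k2 * curl (xvec w) x i := by
  intro x hx i
  have hphi := phi_contDiffOn hU hw
  have dm : ∀ b : Fin 3, DifferentiableAt ℝ (fun y => w y * ((y b : ℝ) : ℂ)) x :=
    fun b => (diffAt3 hU hw hx).mul (diff_coord b x)
  have e1 : pd (i + 1) (fun y => curl (curl (xvec w)) y (i + 2)) x
      = pd (i + 1) (fun y => pd (i + 2) (phi w) y + k2 * (w y * ((y (i + 2) : ℝ) : ℂ))) x :=
    pd_congr hU (fun y hy => curlcurl_xvec_eq hU hw hH y hy (i + 2)) hx _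
  have e2 : pd (i + 2) (fun y => curl (curl (xvec w)) y (i + 1)) x
      = pd (i + 2) (fun y => pd (i + 1) (phi w) y + k2 * (w y * ((y (i + 1) : ℝ) : ℂ))) x :=
    pd_congr hU (fun y hy => curlcurl_xvec_eq hU hw hH y hy (i + 1)) hx _
  have lhs_eq : curl (curl (curl (xvec w))) x i
      = pd (i + 1) (fun y => curl (curl (xvec w)) y (i + 2)) x
        - pd (i + 2) (fun y => curl (curl (xvec w)) y (i + 1)) x := rfl
  have rhs_eq : curl (xvec w) x i
      = pd (i + 1) (fun y => w y * ((y (i + 2) : ℝ) : ℂ)) x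
        - pd (i + 2) (fun y => w y * ((y (i + 1) : ℝ) : ℂ)) x := rfl
  rw [lhs_eq, e1, e2,
    pd_add (pd_phi_diffAt hU hw hx (i + 2)) ((dm (i + 2)).const_mul k2) (i + 1),
    pd_add (pd_phi_diffAt hU hw hx (i + 1)) ((dm (i + 1)).const_mul k2) (i + 2),
    pd_const_mul (dm (i + 2)) k2 (i + 1), pd_const_mul (dm (i + 1)) k2 (i + 2),
    rhs_eq]
  have hCphi : pd (i + 1) (pd (i + 2) (phi w)) x = pd (i + 2) (pd (i + 1) (phi w)) x :=
    clairaut hU hphi hx (i + 1) (i + 2)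
  linear_combination hCphi

lemma curl_xvec_diffAt {U : Set E3} (hU : IsOpen U) {w : E3 → ℂ} (hw : ContDiffOn ℝ 3 w U)
    {x : E3} (hx : x ∈ U) (j : Fin 3) :
    DifferentiableAt ℝ (fun y => curl (xvec w) y j) x := by
  have hEq : (fun y => curl (xvec w) y j) =ᶠ[nhds x]
      (fun y => pd (j + 1) w y * ((y (j + 2) : ℝ) : ℂ)
        - pd (j + 2) w y * ((y (j + 1) : ℝ) : ℂ)) :=
    Filter.eventuallyEq_of_mem (hU.mem_nhds hx) (fun y hy => curl_xvec_eq hU hw y hy j)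
  rw [hEq.differentiableAt_iff]
  exact ((pd_diffAt hU hw hx (j + 1)).mul (diff_coord _ x)).sub
    ((pd_diffAt hU hw hx (j + 2)).mul (diff_coord _ x))

lemma curlcurl_xvec_diffAt {U : Set E3} (hU : IsOpen U) {w : E3 → ℂ} (hw : ContDiffOn ℝ 3 w U)
    {k2 : ℂ} (hH : ∀ x ∈ U, lap w x + k2 * w x = 0)
    {x : E3} (hx : x ∈ U) (j : Fin 3) :
    DifferentiableAt ℝ (fun y => curl (curl (xvec w)) y j) x := by
  have hEq : (fun y => curl (curl (xvec w)) y j) =ᶠ[nhds x]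
      (fun y => pd j (phi w) y + k2 * (w y * ((y j : ℝ) : ℂ))) :=
    Filter.eventuallyEq_of_mem (hU.mem_nhds hx) (fun y hy => curlcurl_xvec_eq hU hw hH y hy j)
  rw [hEq.differentiableAt_iff]
  exact (pd_phi_diffAt hU hw hx j).add
    (((diffAt3 hU hw hx).mul (diff_coord j x)).const_mul k2)

end DebyeAux

open DebyeAux

/-- **Debye representation.** If the Debye potentials `u, v` are `C³` on an open
set `U` and satisfy the scalar Helmholtz equation with `k² = ω²εμ` there, then
`E = ∇×(∇×(x v)) + iωμ ∇×(x u)` and `H = ∇×(∇×(x u)) − iωε ∇×(x v)` satisfy the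
time-harmonic Maxwell equations `∇×H = −iωεE`, `∇×E = iωμH` on `U`. -/
theorem debye_representation_satisfies_maxwell
    (U : Set E3) (hU : IsOpen U) (ω ε μ : ℂ)
    (u v : E3 → ℂ) (hu : ContDiffOn ℝ 3 u U) (hv : ContDiffOn ℝ 3 v U)
    (hHu : ∀ x ∈ U, lap u x + (ω ^ 2 * ε * μ) * u x = 0)
    (hHv : ∀ x ∈ U, lap v x + (ω ^ 2 * ε * μ) * v x = 0)
    (E H : E3 → Fin 3 → ℂ)
    (hEdef : ∀ y, ∀ i : Fin 3,
      E y i = curl (curl (xvec v)) y i + Complex.I * ω * μ * curl (xvec u) y i)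
    (hHdef : ∀ y, ∀ i : Fin 3,
      H y i = curl (curl (xvec u)) y i - Complex.I * ω * ε * curl (xvec v) y i) :
    ∀ x ∈ U, ∀ i : Fin 3,
      curl H x i = -Complex.I * ω * ε * E x i ∧
      curl E x i = Complex.I * ω * μ * H x i := by

  intro x hx i
  constructor
  · have hfun2 : (fun y => H y (i + 2)) = fun y =>
        curl (curl (xvec u)) y (i + 2) - Complex.I * ω * ε * curl (xvec v) y (i + 2) :=
      funext fun y => hHdef y (i + 2)
    have hfun1 : (fun y => H y (i + 1)) = fun y =>
        curl (curl (xvec u)) y (i + 1) - Complex.I * ω * ε * curl (xvec v) y (i + 1) :=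
      funext fun y => hHdef y (i + 1)
    have lhs_eq : curl H x i
        = pd (i + 1) (fun y => H y (i + 2)) x - pd (i + 2) (fun y => H y (i + 1)) x := rfl
    rw [lhs_eq, hfun1, hfun2,
      pd_sub (curlcurl_xvec_diffAt hU hu hHu hx (i + 2))
        ((curl_xvec_diffAt hU hv hx (i + 2)).const_mul _) (i + 1),
      pd_sub (curlcurl_xvec_diffAt hU hu hHu hx (i + 1))
        ((curl_xvec_diffAt hU hv hx (i + 1)).const_mul _) (i + 2),
      pd_const_mul (curl_xvec_diffAt hU hv hx (i + 2)) _ (i + 1),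
      pd_const_mul (curl_xvec_diffAt hU hv hx (i + 1)) _ (i + 2),
      hEdef x i]
    have h3u : pd (i + 1) (fun y => curl (curl (xvec u)) y (i + 2)) x
        - pd (i + 2) (fun y => curl (curl (xvec u)) y (i + 1)) x
        = (ω ^ 2 * ε * μ) * curl (xvec u) x i := triple_curl hU hu hHu x hx i
    have hCCv : curl (curl (xvec v)) x i
        = pd (i + 1) (fun y => curl (xvec v) y (i + 2)) x
          - pd (i + 2) (fun y => curl (xvec v) y (i + 1)) x := rfl
    rw [hCCv]
    linear_combination h3u + (ω ^ 2 * ε * μ * curl (xvec u) x i) * Complex.I_sq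
  · have hfun2 : (fun y => E y (i + 2)) = fun y =>
        curl (curl (xvec v)) y (i + 2) + Complex.I * ω * μ * curl (xvec u) y (i + 2) :=
      funext fun y => hEdef y (i + 2)
    have hfun1 : (fun y => E y (i + 1)) = fun y =>
        curl (curl (xvec v)) y (i + 1) + Complex.I * ω * μ * curl (xvec u) y (i + 1) :=
      funext fun y => hEdef y (i + 1)
    have lhs_eq : curl E x i
        = pd (i + 1) (fun y => E y (i + 2)) x - pd (i + 2) (fun y => E y (i + 1)) x := rfl
    rw [lhs_eq, hfun1, hfun2,
      pd_add (curlcurl_xvec_diffAt hU hv hHv hx (i + 2))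
        ((curl_xvec_diffAt hU hu hx (i + 2)).const_mul _) (i + 1),
      pd_add (curlcurl_xvec_diffAt hU hv hHv hx (i + 1))
        ((curl_xvec_diffAt hU hu hx (i + 1)).const_mul _) (i + 2),
      pd_const_mul (curl_xvec_diffAt hU hu hx (i + 2)) _ (i + 1),
      pd_const_mul (curl_xvec_diffAt hU hu hx (i + 1)) _ (i + 2),
      hHdef x i]
    have h3v : pd (i + 1) (fun y => curl (curl (xvec v)) y (i + 2)) x
        - pd (i + 2) (fun y => curl (curl (xvec v)) y (i + 1)) x
        = (ω ^ 2 * ε * μ) * curl (xvec v) x i := triple_curl hU hv hHv x hx i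
    have hCCu : curl (curl (xvec u)) x i
        = pd (i + 1) (fun y => curl (xvec u) y (i + 2)) x
          - pd (i + 2) (fun y => curl (xvec u) y (i + 1)) x := rfl
    rw [hCCu]
    linear_combination h3v + (ω ^ 2 * ε * μ * curl (xvec v) x i) * Complex.I_sq
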